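/- arXiv:2412.18891 — 4 statements merged into one kernel-verified Lean document; each statement's English description precedes it below -/
import Mathlib

section
/- Let G be a non-trivial group, let 𝒞 be a joinable compression family for G, and let H = ⟨⋃𝒞⟩ be the subgroup of G generated by the members of 𝒞. Then the derived subgroup D(H) is the monolith of G; that is, D(H) is a non-trivial normal subgroup of G which is contained in every non-trivial normal subgroup of G. -/
namespace Paper

variable {G : Type*} [Group G]

/-- Conjugate of a subgroup: `g A g⁻¹`. -/
def conjS (g : G) (A : Subgroup G) : Subgroup G := A.map (MulAut.conj g).toMonoidHom

/-- The family is invariant under conjugation in `G`. -/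
def ConjInvariant (C : Set (Subgroup G)) : Prop := ∀ (g : G), ∀ A ∈ C, conjS g A ∈ C

/-- Condition (A): every member of the family is non-abelian. -/
def CondA (C : Set (Subgroup G)) : Prop :=
  ∀ A ∈ C, ∃ a ∈ A, ∃ b ∈ A, a * b ≠ b * a

/-- Condition (B): for every nontrivial element `g` of `H` there is a member `A` of the
family with `[A, gAg⁻¹] = 1`. -/
def CondB (C : Set (Subgroup G)) (H : Subgroup G) : Prop :=
  ∀ g ∈ H, g ≠ 1 → ∃ A ∈ C, ⁅A, conjS g A⁆ = (⊥ : Subgroup G)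

/-- Condition (C): `H` is semi-transitive on the family. -/
def CondC (C : Set (Subgroup G)) (H : Subgroup G) : Prop :=
  ∀ A ∈ C, ∀ B ∈ C, ∃ g ∈ H, conjS g A ≤ B

/-- Condition (D): the family is joinable. -/
def CondD (C : Set (Subgroup G)) : Prop :=
  ∀ A ∈ C, ∀ B ∈ C, ∀ C' ∈ C, ⁅A, C'⁆ = (⊥ : Subgroup G) → ¬ C' ≤ B →
    ∃ D ∈ C, A ⊔ B ≤ D

/-- Condition (E): the family is shiftable over `H`: for each `A` in the family there is
`g ∈ H` and a homomorphism from the unrestricted direct product `∏_{i ≥ 1} A` into `H`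
restricting to the identity on the first factor, which `g` conjugates by the shift. -/
def CondE (C : Set (Subgroup G)) (H : Subgroup G) : Prop :=
  ∀ A ∈ C, ∃ g ∈ H, ∃ φ : (ℕ → A) →* G,
    (∀ f : ℕ → A, φ f ∈ H) ∧
    (∀ a : A, φ (fun i => if i = 0 then a else 1) = (a : G)) ∧
    (∀ f : ℕ → A, g * φ f * g⁻¹ = φ (fun i => match i with | 0 => 1 | (n+1) => f n))

/-- Conditions (A)–(C): a compression family for `H`. -/
def IsCompressionFamily (C : Set (Subgroup G)) (H : Subgroup G) : Prop :=
  ConjInvariant C ∧ CondA C ∧ CondB C H ∧ CondC C H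

/-- Conditions (A)–(D): a joinable compression family for `H`. -/
def IsJoinableCompressionFamily (C : Set (Subgroup G)) (H : Subgroup G) : Prop :=
  IsCompressionFamily C H ∧ CondD C

/-- Conditions (A)–(E): a shift-joinable compression family for `H`. -/
def IsShiftJoinableCompressionFamily (C : Set (Subgroup G)) (H : Subgroup G) : Prop :=
  IsJoinableCompressionFamily C H ∧ CondE C H

open scoped commutatorElement

section Helpers

variable {C : Set (Subgroup G)}

lemma mem_conjS_of_mem {g x : G} {A : Subgroup G} (hx : x ∈ A) :
    g * x * g⁻¹ ∈ conjS g A :=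
  ⟨x, hx, rfl⟩

lemma conjS_mem_iff {g y : G} {A : Subgroup G} :
    y ∈ conjS g A ↔ ∃ x ∈ A, g * x * g⁻¹ = y := by
  simp [conjS, Subgroup.mem_map, MulAut.conj_apply]

/-- Key lemma: for every nontrivial normal `N` and every member `A` of the family,
there is `n ∈ N` such that `A` commutes elementwise with `n A n⁻¹`. -/
lemma exists_commuting_conjugate (hB : CondB C (⊤ : Subgroup G))
    (hCc : CondC C (⊤ : Subgroup G)) {N : Subgroup G} (hN : N.Normal) (hNbot : N ≠ ⊥)
    {A : Subgroup G} (hA : A ∈ C) :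
    ∃ n ∈ N, ∀ a ∈ A, ∀ a' ∈ A, a * (n * a' * n⁻¹) = (n * a' * n⁻¹) * a := by
  obtain ⟨n₀, hn₀N, hn₀1⟩ : ∃ n ∈ N, n ≠ (1 : G) := by
    by_contra h
    push_neg at h
    exact hNbot (eq_bot_iff.mpr fun x hx => by simpa [Subgroup.mem_bot] using h x hx)
  obtain ⟨E, hE, hcomm⟩ := hB n₀ (Subgroup.mem_top n₀) hn₀1
  obtain ⟨g, -, hg⟩ := hCc A hA E hE
  refine ⟨g⁻¹ * n₀ * g, by simpa using hN.conj_mem n₀ hn₀N g⁻¹, ?_⟩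
  intro a ha a' ha'
  have h1 : g * a * g⁻¹ ∈ E := hg (mem_conjS_of_mem ha)
  have h2 : n₀ * (g * a' * g⁻¹) * n₀⁻¹ ∈ conjS n₀ E :=
    mem_conjS_of_mem (hg (mem_conjS_of_mem ha'))
  have hxy : ⁅g * a * g⁻¹, n₀ * (g * a' * g⁻¹) * n₀⁻¹⁆ ∈ (⊥ : Subgroup G) :=
    (Subgroup.commutator_le.mp hcomm.le) _ h1 _ h2
  have hxy' : (g * a * g⁻¹) * (n₀ * (g * a' * g⁻¹) * n₀⁻¹)
      = (n₀ * (g * a' * g⁻¹) * n₀⁻¹) * (g * a * g⁻¹) := by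
    have := Subgroup.mem_bot.mp hxy
    exact commutatorElement_eq_one_iff_mul_comm.mp this
  calc a * (g⁻¹ * n₀ * g * a' * (g⁻¹ * n₀ * g)⁻¹)
      = g⁻¹ * ((g * a * g⁻¹) * (n₀ * (g * a' * g⁻¹) * n₀⁻¹)) * g := by group
    _ = g⁻¹ * ((n₀ * (g * a' * g⁻¹) * n₀⁻¹) * (g * a * g⁻¹)) * g := by rw [hxy']
    _ = (g⁻¹ * n₀ * g * a' * (g⁻¹ * n₀ * g)⁻¹) * a := by group

/-- If `x` commutes with `n y n⁻¹` for some `n ∈ N`, then `⁅x,y⁆ ∈ N`. -/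
lemma commutator_mem_of_conj_comm {N : Subgroup G} (hN : N.Normal) {n x y : G}
    (hn : n ∈ N) (h : x * (n * y * n⁻¹) = (n * y * n⁻¹) * x) : ⁅x, y⁆ ∈ N := by
  haveI := hN
  apply (QuotientGroup.eq_one_iff _).mp
  have hn1 : ((n : G) : G ⧸ N) = 1 := (QuotientGroup.eq_one_iff n).mpr hn
  have h2 : ((x : G) : G ⧸ N) * ((y : G) : G ⧸ N) = ((y : G) : G ⧸ N) * ((x : G) : G ⧸ N) := by
    have := congrArg (fun z : G => (z : G ⧸ N)) h
    simpa [QuotientGroup.mk_mul, QuotientGroup.mk_inv, hn1] using this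
  have : ((⁅x, y⁆ : G) : G ⧸ N) = ((x : G) : G ⧸ N) * ↑y * (↑x)⁻¹ * (↑y)⁻¹ := by
    simp [commutatorElement_def, QuotientGroup.mk_mul, QuotientGroup.mk_inv]
  rw [this, h2]
  group

/-- Commutators of elements of one member of the family lie in every nontrivial normal
subgroup. -/
lemma commutator_mem_of_mem_same (hB : CondB C (⊤ : Subgroup G))
    (hCc : CondC C (⊤ : Subgroup G)) {N : Subgroup G} (hN : N.Normal) (hNbot : N ≠ ⊥)
    {A : Subgroup G} (hA : A ∈ C) {x y : G} (hx : x ∈ A) (hy : y ∈ A) : ⁅x, y⁆ ∈ N := by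
  obtain ⟨n, hnN, hc⟩ := exists_commuting_conjugate hB hCc hN hNbot hA
  exact commutator_mem_of_conj_comm hN hnN (hc x hx y hy)

/-- Cross commutators between two members of the family lie in every nontrivial normal
subgroup. -/
lemma commutator_mem_cross (hInv : ConjInvariant C) (hB : CondB C (⊤ : Subgroup G))
    (hCc : CondC C (⊤ : Subgroup G)) (hD : CondD C) {N : Subgroup G} (hN : N.Normal)
    (hNbot : N ≠ ⊥) {A B : Subgroup G} (hA : A ∈ C) (hB' : B ∈ C) {a b : G}
    (ha : a ∈ A) (hb : b ∈ B) : ⁅a, b⁆ ∈ N := by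
  haveI := hN
  obtain ⟨n, hnN, hc⟩ := exists_commuting_conjugate hB hCc hN hNbot hA
  have hbot : ⁅A, conjS n A⁆ = (⊥ : Subgroup G) := by
    refine le_bot_iff.mp (Subgroup.commutator_le.mpr ?_)
    intro p hp q hq
    obtain ⟨a', ha', rfl⟩ := conjS_mem_iff.mp hq
    exact Subgroup.mem_bot.mpr (commutatorElement_eq_one_iff_mul_comm.mpr (hc p hp a' ha'))
  by_cases hle : conjS n A ≤ B
  · -- n a n⁻¹ ∈ B, and mod N this is a
    have hmem : n * a * n⁻¹ ∈ B := hle (mem_conjS_of_mem ha)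
    have hM : ⁅n * a * n⁻¹, b⁆ ∈ N :=
      commutator_mem_of_mem_same hB hCc hN hNbot hB' hmem hb
    apply (QuotientGroup.eq_one_iff _).mp
    have hn1 : ((n : G) : G ⧸ N) = 1 := (QuotientGroup.eq_one_iff n).mpr hnN
    have h1 : ((⁅n * a * n⁻¹, b⁆ : G) : G ⧸ N) = 1 := (QuotientGroup.eq_one_iff _).mpr hM
    simp only [commutatorElement_def, QuotientGroup.mk_mul, QuotientGroup.mk_inv, hn1,
      one_mul, mul_one, inv_one] at h1 ⊢
    simpa using h1
  · obtain ⟨D, hD', hsub⟩ := hD A hA B hB' (conjS n A) (hInv n A hA) hbot hle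
    exact commutator_mem_of_mem_same hB hCc hN hNbot hD'
      (hsub (Subgroup.mem_sup_left ha)) (hsub (Subgroup.mem_sup_right hb))

end Helpers

/-- Theorem (compressible splittable union, part (i)): if 𝒞 is a joinable compression
family for `G` and `H = ⟨⋃𝒞⟩`, then the derived subgroup `D(H) = ⁅H,H⁆` is the monolith
of `G`: it is a non-trivial normal subgroup of `G` contained in every non-trivial normal
subgroup of `G`. -/
theorem derived_subgroup_is_monolith [Nontrivial G] (C : Set (Subgroup G))
    (hC : IsJoinableCompressionFamily C (⊤ : Subgroup G))
    (H : Subgroup G) (hH : H = sSup C) :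
    (⁅H, H⁆ : Subgroup G).Normal ∧ (⁅H, H⁆ : Subgroup G) ≠ ⊥ ∧
      ∀ N : Subgroup G, N.Normal → N ≠ ⊥ → (⁅H, H⁆ : Subgroup G) ≤ N := by
  obtain ⟨⟨hInv, hCa, hCb, hCc⟩, hCd⟩ := hC
  subst hH
  -- the generating set
  set U : Set G := ⋃ A ∈ C, (A : Set G) with hU
  have hgen : sSup C = Subgroup.closure U := by
    apply le_antisymm
    · refine sSup_le fun A hA => fun x hx => Subgroup.subset_closure ?_
      exact Set.mem_biUnion hA hx
    · refine (Subgroup.closure_le _).mpr fun x hx => ?_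
      obtain ⟨A, hA, hxA⟩ := Set.mem_iUnion₂.mp hx
      exact (le_sSup hA) hxA
  -- H is normal
  have hHnorm : (sSup C).Normal := by
    constructor
    intro x hx g
    rw [hgen] at hx ⊢
    induction hx using Subgroup.closure_induction with
    | mem y hy =>
      obtain ⟨A, hA, hyA⟩ := Set.mem_iUnion₂.mp hy
      have : g * y * g⁻¹ ∈ conjS g A := mem_conjS_of_mem hyA
      have hle : conjS g A ≤ Subgroup.closure U := by
        rw [← hgen]; exact le_sSup (hInv g A hA)
      exact hle this
    | one => simpa using Subgroup.one_mem _
    | mul y z hy hz ihy ihz =>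
      have : g * (y * z) * g⁻¹ = (g * y * g⁻¹) * (g * z * g⁻¹) := by group
      rw [this]; exact Subgroup.mul_mem _ ihy ihz
    | inv y hy ihy =>
      have : g * y⁻¹ * g⁻¹ = (g * y * g⁻¹)⁻¹ := by group
      rw [this]; exact Subgroup.inv_mem _ ihy
  haveI := hHnorm
  refine ⟨Subgroup.commutator_normal _ _, ?_, ?_⟩
  · -- nontriviality
    obtain ⟨g₀, hg₀⟩ := exists_ne (1 : G)
    obtain ⟨A, hA, -⟩ := hCb g₀ (Subgroup.mem_top g₀) hg₀
    obtain ⟨a, ha, b, hb, hab⟩ := hCa A hA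
    have haH : a ∈ sSup C := (le_sSup hA) ha
    have hbH : b ∈ sSup C := (le_sSup hA) hb
    intro hbot
    have : ⁅a, b⁆ ∈ (⊥ : Subgroup G) := hbot ▸ Subgroup.commutator_mem_commutator haH hbH
    exact hab (commutatorElement_eq_one_iff_mul_comm.mp (Subgroup.mem_bot.mp this))
  · -- contained in every nontrivial normal subgroup
    intro N hN hNbot
    haveI := hN
    -- all images in G ⧸ N of elements of H pairwise commute
    have main : ∀ x ∈ sSup C, ∀ y ∈ sSup C,
        ((x : G) : G ⧸ N) * ((y : G) : G ⧸ N) = ((y : G) : G ⧸ N) * ((x : G) : G ⧸ N) := by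
      rw [hgen]
      intro x hx
      induction hx using Subgroup.closure_induction with
      | mem x hx =>
        intro y hy
        induction hy using Subgroup.closure_induction with
        | mem y hy =>
          obtain ⟨A, hA, hxA⟩ := Set.mem_iUnion₂.mp hx
          obtain ⟨B, hB', hyB⟩ := Set.mem_iUnion₂.mp hy
          have hmem := commutator_mem_cross hInv hCb hCc hCd hN hNbot hA hB' hxA hyB
          have h1 : (QuotientGroup.mk' N) ⁅x, y⁆ = 1 := (QuotientGroup.eq_one_iff _).mpr hmem
          rw [map_commutatorElement] at h1
          exact commutatorElement_eq_one_iff_mul_comm.mp h1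
        | one => simp
        | mul y z hy hz ihy ihz =>
          simp only [QuotientGroup.mk_mul]
          rw [← mul_assoc, ihy, mul_assoc, ihz, ← mul_assoc]
        | inv y hy ihy =>
          simp only [QuotientGroup.mk_inv]
          exact (Commute.inv_right ihy).eq
      | one => intro y hy; simp
      | mul x z hx hz ihx ihz =>
        intro y hy
        simp only [QuotientGroup.mk_mul]
        rw [mul_assoc, ihz y hy, ← mul_assoc, ihx y hy, mul_assoc]
      | inv x hx ihx =>
        intro y hy
        simp only [QuotientGroup.mk_inv]
        exact (Commute.inv_left (ihx y hy)).eq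
    refine Subgroup.commutator_le.mpr fun g₁ hg₁ g₂ hg₂ => ?_
    apply (QuotientGroup.eq_one_iff _).mp
    have h3 : ((⁅g₁, g₂⁆ : G) : G ⧸ N) = ⁅((g₁ : G) : G ⧸ N), ((g₂ : G) : G ⧸ N)⁆ :=
      map_commutatorElement (QuotientGroup.mk' N) g₁ g₂
    rw [h3]
    exact commutatorElement_eq_one_iff_mul_comm.mpr (main g₁ hg₁ g₂ hg₂)

end Paper
end

section
/- Let G be a non-trivial group and let 𝒞 be a family of subgroups of G that is invariant under conjugation in G, such that every A ∈ 𝒞 is non-abelian and such that for every g ∈ G with g ≠ 1 there is A ∈ 𝒞 with [A, gAg⁻¹] = {1}. Then there exist pairwise distinct A, B, C ∈ 𝒞 such that [A, C] = {1} and C is not contained in B. -/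
namespace Paper

variable {G : Type*} [Group G]

/-- Lemma (nondegeneracy): if every member of the conjugation-invariant family 𝒞 is
non-abelian and every non-trivial `g ∈ G` has some `A ∈ 𝒞` with `[A, gAg⁻¹] = 1`,
then there are pairwise distinct `A, B, C' ∈ 𝒞` with `[A, C'] = 1` and `C' ≰ B`. -/
theorem nondegenerate [Nontrivial G] (C : Set (Subgroup G))
    (hinv : ConjInvariant C) (hA : CondA C) (hB : CondB C (⊤ : Subgroup G)) :
    ∃ A ∈ C, ∃ B ∈ C, ∃ C' ∈ C, A ≠ B ∧ A ≠ C' ∧ B ≠ C' ∧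
      ⁅A, C'⁆ = (⊥ : Subgroup G) ∧ ¬ C' ≤ B := by
  have comm_of : ∀ {H K : Subgroup G}, ⁅H, K⁆ = (⊥ : Subgroup G) →
      ∀ {x y : G}, x ∈ H → y ∈ K → x * y = y * x := by
    intro H K h x y hx hy
    have := Subgroup.commutator_mem_commutator hx hy
    rw [h, Subgroup.mem_bot, commutatorElement_eq_one_iff_mul_comm] at this
    exact this
  have mem_conjS : ∀ {g x : G} {A : Subgroup G}, x ∈ A → g * x * g⁻¹ ∈ conjS g A := by
    intro g x A hx
    exact Subgroup.mem_map.mpr ⟨x, hx, rfl⟩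
  obtain ⟨g, hg⟩ := exists_ne (1 : G)
  obtain ⟨A, hAC, hAcomm⟩ := hB g trivial hg
  set C' := conjS g A with hC'def
  have hC'C : C' ∈ C := hinv g A hAC
  -- noncommuting pair in A
  obtain ⟨a, haA, b, hbA, hab⟩ := hA A hAC
  have ha1 : a ≠ 1 := by rintro rfl; simp at hab
  -- noncommuting pair in C'
  obtain ⟨x, hxC', y, hyC', hxy⟩ := hA C' hC'C
  have hAneC' : A ≠ C' := by
    rintro h
    exact hab (comm_of hAcomm haA (h ▸ hbA))
  have hC'nleA : ¬ C' ≤ A := by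
    intro h
    exact hxy (comm_of hAcomm (h hxC') hyC')
  -- second pair from a
  obtain ⟨A₂, hA₂C, hA₂comm⟩ := hB a trivial ha1
  set C₂ := conjS a A₂ with hC₂def
  have hC₂C : C₂ ∈ C := hinv a A₂ hA₂C
  have hA₂neA : A₂ ≠ A := by
    rintro rfl
    have hbmem : b ∈ conjS a A₂ := by
      have : b = a * (a⁻¹ * b * a) * a⁻¹ := by group
      rw [this]
      exact mem_conjS (A₂.mul_mem (A₂.mul_mem (A₂.inv_mem haA) hbA) haA)
    exact hab (comm_of hA₂comm haA hbmem)
  have hC₂neA : C₂ ≠ A := by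
    intro h
    have haC₂ : a ∈ C₂ := by rw [h]; exact haA
    obtain ⟨w, hw, hwe⟩ := Subgroup.mem_map.mp haC₂
    have hwe' : a * w * a⁻¹ = a := hwe
    have hwa : w = a := by
      calc w = a⁻¹ * (a * w * a⁻¹) * a := by group
        _ = a⁻¹ * a * a := by rw [hwe']
        _ = a := by group
    have hamem : a ∈ A₂ := hwa ▸ hw
    have hbmem : b ∈ C₂ := by rw [h]; exact hbA
    exact hab (comm_of hA₂comm hamem hbmem)
  have hkey : ¬ C' ≤ A₂ ∨ ¬ C' ≤ C₂ := by
    by_contra hcon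
    push_neg at hcon
    exact hxy (comm_of hA₂comm (hcon.1 hxC') (hcon.2 hyC'))
  rcases hkey with hk | hk
  · refine ⟨A, hAC, A₂, hA₂C, C', hC'C, Ne.symm hA₂neA, hAneC', ?_, hAcomm, hk⟩
    intro h; rw [h] at hk; exact hk le_rfl
  · refine ⟨A, hAC, C₂, hC₂C, C', hC'C, Ne.symm hC₂neA, hAneC', ?_, hAcomm, hk⟩
    intro h; rw [h] at hk; exact hk le_rfl

end Paper
end

section
/- Let G be a non-trivial group, let 𝒞 be a joinable compression family for G, and let H be a normal subgroup of G that is semi-transitive on 𝒞. Then for every A ∈ 𝒞 there exist B₁, B₂ ∈ 𝒞 such that B₁ ≤ A, B₂ ≤ A and [B₁, B₂] = {1}. -/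
namespace Paper

variable {G : Type*} [Group G]

lemma mem_conjS {g x : G} {A : Subgroup G} : x ∈ conjS g A ↔ g⁻¹ * x * g ∈ A := by
  simp only [conjS, Subgroup.mem_map, MulEquiv.coe_toMonoidHom, MulAut.conj_apply]
  constructor
  · rintro ⟨a, ha, rfl⟩
    have h : g⁻¹ * (g * a * g⁻¹) * g = a := by group
    rw [h]; exact ha
  · intro h
    exact ⟨_, h, by group⟩

lemma comm_bot_iff (P Q : Subgroup G) :
    ⁅P, Q⁆ = (⊥ : Subgroup G) ↔ ∀ p ∈ P, ∀ q ∈ Q, p * q = q * p := by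
  rw [eq_bot_iff, Subgroup.commutator_le]
  simp [Subgroup.mem_bot, commutatorElement_eq_one_iff_mul_comm]

lemma comm_conjS {g : G} {P Q : Subgroup G} (h : ⁅P, Q⁆ = (⊥ : Subgroup G)) :
    ⁅conjS g P, conjS g Q⁆ = (⊥ : Subgroup G) := by
  rw [comm_bot_iff] at h ⊢
  intro x hx y hy
  have hc := h _ (mem_conjS.1 hx) _ (mem_conjS.1 hy)
  have h2 : g⁻¹ * (x * y) * g = g⁻¹ * (y * x) * g := by
    calc g⁻¹ * (x * y) * g = (g⁻¹ * x * g) * (g⁻¹ * y * g) := by group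
    _ = (g⁻¹ * y * g) * (g⁻¹ * x * g) := hc
    _ = g⁻¹ * (y * x) * g := by group
  exact mul_left_cancel (mul_right_cancel h2)

lemma conjS_conjS (a b : G) (P : Subgroup G) : conjS a (conjS b P) = conjS (a * b) P := by
  ext x
  rw [mem_conjS, mem_conjS, mem_conjS]
  have h : b⁻¹ * (a⁻¹ * x * a) * b = (a * b)⁻¹ * x * (a * b) := by group
  rw [h]

lemma conjS_one (P : Subgroup G) : conjS 1 P = P := by
  ext x; rw [mem_conjS]; simp

lemma conjS_mono {g : G} {P Q : Subgroup G} (h : P ≤ Q) : conjS g P ≤ conjS g Q :=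
  Subgroup.map_mono h

lemma conjS_self {a : G} {P : Subgroup G} (ha : a ∈ P) : conjS a P = P := by
  ext x
  rw [mem_conjS]
  constructor
  · intro h
    have hx : x = a * (a⁻¹ * x * a) * a⁻¹ := by group
    rw [hx]; exact P.mul_mem (P.mul_mem ha h) (P.inv_mem ha)
  · intro h
    exact P.mul_mem (P.mul_mem (P.inv_mem ha) h) ha

lemma conjS_of_comm {a : G} {P : Subgroup G} (h : ∀ p ∈ P, a * p = p * a) :
    conjS a P = P := by
  ext x
  rw [mem_conjS]
  constructor
  · intro hx
    have h2 := h _ hx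
    have h5 : (a⁻¹ * x * a) * a = x * a := by
      calc (a⁻¹ * x * a) * a = a * (a⁻¹ * x * a) := h2.symm
      _ = x * a := by group
    have h4 : a⁻¹ * x * a = x := mul_right_cancel h5
    rwa [h4] at hx
  · intro hx
    have h2 := h _ hx
    have h4 : a⁻¹ * x * a = x := by
      calc a⁻¹ * x * a = a⁻¹ * (x * a) := by group
      _ = a⁻¹ * (a * x) := by rw [h2]
      _ = x := by group
    rwa [h4]

/-- Lemma (leafless, part (i)): if 𝒞 is a joinable compression family for `G` and `H` is
a normal subgroup of `G` that is semi-transitive on 𝒞, then every `A ∈ 𝒞` contains two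
commuting members of 𝒞. -/
theorem exists_commuting_members_below [Nontrivial G] (C : Set (Subgroup G))
    (hC : IsJoinableCompressionFamily C (⊤ : Subgroup G))
    (H : Subgroup G) (hN : H.Normal) (hsemi : CondC C H) :
    ∀ A ∈ C, ∃ B₁ ∈ C, ∃ B₂ ∈ C, B₁ ≤ A ∧ B₂ ≤ A ∧ ⁅B₁, B₂⁆ = (⊥ : Subgroup G) := by
  obtain ⟨⟨hinv, hcondA, hcondB, hcondC⟩, hcondD⟩ := hC
  -- key claim: some member of the family contains two commuting members
  have key : ∃ D ∈ C, ∃ P ∈ C, ∃ Q ∈ C,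
      P ≤ D ∧ Q ≤ D ∧ ⁅P, Q⁆ = (⊥ : Subgroup G) := by
    by_contra hK
    push_neg at hK
    -- no member is abelian (as a commutator statement)
    have nonab : ∀ P ∈ C, ⁅P, P⁆ = (⊥ : Subgroup G) → False := by
      intro P hP h
      obtain ⟨a, ha, b, hb, hab⟩ := hcondA P hP
      exact hab ((comm_bot_iff P P).1 h a ha b hb)
    -- a member that commutes with some member is minimal in C
    have F3 : ∀ M' ∈ C, (∃ M'' ∈ C, ⁅M', M''⁆ = (⊥ : Subgroup G)) →
        ∀ B₀ ∈ C, B₀ ≤ M' → B₀ = M' := by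
      intro M' hM' hpart B₀ hB₀ hle
      obtain ⟨M'', hM'', hcomm⟩ := hpart
      by_contra hne
      have hnle : ¬ M' ≤ B₀ := fun h => hne (le_antisymm hle h)
      have hsym : ⁅M'', M'⁆ = (⊥ : Subgroup G) := by
        rw [comm_bot_iff] at hcomm ⊢
        intro p hp q hq
        exact (hcomm q hq p hp).symm
      obtain ⟨D, hDmem, hDle⟩ := hcondD M'' hM'' B₀ hB₀ M' hM' hsym hnle
      have hc2 : ⁅M'', B₀⁆ = (⊥ : Subgroup G) := by
        rw [comm_bot_iff]
        intro p hp q hq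
        exact (comm_bot_iff M'' M').1 hsym p hp q (hle hq)
      exact hK D hDmem M'' hM'' B₀ hB₀ (le_sup_left.trans hDle)
        (le_sup_right.trans hDle) hc2
    -- get a commuting pair E, F from condition (B)
    obtain ⟨g, hg⟩ := exists_ne (1 : G)
    obtain ⟨E, hE, hEF0⟩ := hcondB g (Subgroup.mem_top g) hg
    obtain ⟨F, hF, hEF⟩ : ∃ F ∈ C, ⁅E, F⁆ = (⊥ : Subgroup G) :=
      ⟨conjS g E, hinv g E hE, hEF0⟩
    -- every member is conjugate onto E
    have conjE : ∀ P ∈ C, ∃ y : G, conjS y P = E := by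
      intro P hP
      obtain ⟨y, -, hy⟩ := hcondC P hP E hE
      exact ⟨y, F3 E hE ⟨F, hF, hEF⟩ (conjS y P) (hinv y P hP) hy⟩
    -- every member has a commuting partner in C
    have partner : ∀ P ∈ C, ∃ Q ∈ C, ⁅P, Q⁆ = (⊥ : Subgroup G) := by
      intro P hP
      obtain ⟨y, hy⟩ := conjE P hP
      refine ⟨conjS y⁻¹ F, hinv _ _ hF, ?_⟩
      have h := comm_conjS (g := y⁻¹) hEF
      rw [← hy, conjS_conjS, inv_mul_cancel, conjS_one] at h
      exact h
    -- every member is E or F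
    have memEF : ∀ P ∈ C, P = E ∨ P = F := by
      intro P hP
      by_cases hPF : P = F
      · right; exact hPF
      · left
        have hnFP : ¬ F ≤ P := by
          intro h
          exact hPF (F3 P hP (partner P hP) F hF h).symm
        obtain ⟨D, hDmem, hDle⟩ := hcondD E hE P hP F hF hEF hnFP
        have hED : E = D := F3 D hDmem (partner D hDmem) E hE (le_sup_left.trans hDle)
        have hPD : P ≤ E := by rw [hED]; exact le_sup_right.trans hDle
        exact F3 E hE ⟨F, hF, hEF⟩ P hP hPD
    -- a nontrivial element of E normalizes both E and F: contradiction with (B)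
    obtain ⟨a, ha, b, hb, hab⟩ := hcondA E hE
    have ha1 : a ≠ 1 := by
      rintro rfl
      exact hab (by simp)
    obtain ⟨A₀, hA₀, hcA⟩ := hcondB a (Subgroup.mem_top a) ha1
    obtain h | h := memEF A₀ hA₀
    · subst h
      rw [conjS_self ha] at hcA
      exact nonab A₀ hA₀ hcA
    · subst h
      have hfix : conjS a A₀ = A₀ :=
        conjS_of_comm (fun p hp => (comm_bot_iff E A₀).1 hEF a ha p hp)
      rw [hfix] at hcA
      exact nonab A₀ hA₀ hcA
  -- compress the witness into A
  intro A hAmem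
  obtain ⟨D, hDm, P, hPm, Q, hQm, hPD, hQD, hPQ⟩ := key
  obtain ⟨x, -, hx⟩ := hcondC D hDm A hAmem
  exact ⟨conjS x P, hinv x P hPm, conjS x Q, hinv x Q hQm,
    (conjS_mono hPD).trans hx, (conjS_mono hQD).trans hx, comm_conjS hPQ⟩


end Paper
end

section
/- Let G be a group acting faithfully on a set X, let H ≤ G, let 𝒞* be a G-invariant set of subsets of X, and let 𝒞 = {rist_G(Y) : Y ∈ 𝒞*}. Consider the properties: (i) rist_G(Y) is non-trivial for all Y ∈ 𝒞*; (ii) for every g ∈ G with g ≠ 1 there exists Z ∈ 𝒞* with Z ∩ gZ = ∅; (iii) for all Y, Z ∈ 𝒞* there exists g ∈ H with gY ⊆ Z; (iv) for all Y, Z ∈ 𝒞*, if rist_G(Y) is not contained in rist_G(Z) then there exists W ∈ 𝒞* with W ⊆ Y and rist_G(Z ∩ W) = {1}; (v) for all Y, Z ∈ 𝒞*, if rist_G(Y ∩ W₁) = rist_G(Z ∩ W₁) = {1} for some W₁ ∈ 𝒞*, then Y ∪ Z ⊆ W₂ for some W₂ ∈ 𝒞*. If (i)–(ii) hold then 𝒞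 satisfies conditions (A) and (B) with H = G (𝒞 is nomadic for G); if (i)–(iii) hold then 𝒞 is a compression family for H; if (i)–(v) hold then 𝒞 is a joinable compression family for H. -/
open scoped Pointwise

namespace Paper

variable {G : Type*} [Group G]

/-- The rigid stabiliser of `Y ⊆ X` in `G`: the pointwise stabiliser of `X ∖ Y`. -/
def rist (G : Type*) {X : Type*} [Group G] [MulAction G X] (Y : Set X) : Subgroup G where
  carrier := {g | ∀ x : X, x ∉ Y → g • x = x}
  one_mem' := fun x _ => one_smul G x
  mul_mem' := by
    intro a b ha hb x hx
    rw [mul_smul, hb x hx, ha x hx]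
  inv_mem' := by
    intro a ha x hx
    nth_rewrite 1 [← ha x hx]
    exact inv_smul_smul a x


section Helpers

variable {G X : Type*} [Group G] [MulAction G X]

lemma mem_rist {Y : Set X} {g : G} : g ∈ rist G Y ↔ ∀ x : X, x ∉ Y → g • x = x := Iff.rfl

lemma rist_mono {Y Z : Set X} (h : Y ⊆ Z) : rist G Y ≤ rist G Z := by
  intro g hg x hx
  exact hg x fun hxY => hx (h hxY)

/-- If `g ∈ rist G Y` and `g • x ≠ x` then `g • x ∈ Y`. -/
lemma smul_mem_of_smul_ne {Y : Set X} {g : G} (hg : g ∈ rist G Y) {x : X}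
    (hx : g • x ≠ x) : g • x ∈ Y := by
  by_contra h
  have h2 := (rist G Y).inv_mem hg (g • x) h
  rw [inv_smul_smul] at h2
  exact hx h2.symm

lemma conjS_rist (g : G) (Y : Set X) : conjS g (rist G Y) = rist G (g • Y) := by
  ext a
  simp only [conjS, Subgroup.mem_map, MulEquiv.coe_toMonoidHom, MulAut.conj_apply]
  constructor
  · rintro ⟨b, hb, rfl⟩
    intro x hx
    have hx' : g⁻¹ • x ∉ Y := by
      intro h
      exact hx (by simpa using Set.smul_mem_smul_set (a := g) h)
    calc (g * b * g⁻¹) • x = g • b • g⁻¹ • x := by rw [mul_smul, mul_smul]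
    _ = g • g⁻¹ • x := by rw [hb _ hx']
    _ = x := by simp
  · intro ha
    refine ⟨g⁻¹ * a * g, ?_, by group⟩
    intro x hx
    have hx' : g • x ∉ g • Y := fun h => hx (by rwa [Set.smul_mem_smul_set_iff] at h)
    calc (g⁻¹ * a * g) • x = g⁻¹ • a • g • x := by rw [mul_smul, mul_smul]
    _ = g⁻¹ • g • x := by rw [ha _ hx']
    _ = x := by simp

/-- Elements with disjoint supports commute. -/
lemma rist_commute [FaithfulSMul G X] {Y Z : Set X} (h : Y ∩ Z = ∅) {a b : G}
    (ha : a ∈ rist G Y) (hb : b ∈ rist G Z) : a * b = b * a := by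
  have hd : ∀ x : X, x ∈ Y → x ∉ Z := by
    intro x hx hx'
    exact (Set.eq_empty_iff_forall_notMem.mp h x) ⟨hx, hx'⟩
  apply eq_of_smul_eq_smul (α := X)
  intro x
  rw [mul_smul, mul_smul]
  by_cases hxY : x ∈ Y
  · have hxZ : x ∉ Z := hd x hxY
    rw [hb x hxZ]
    by_cases hax : a • x = x
    · rw [hax, hb x hxZ]
    · have : a • x ∈ Y := smul_mem_of_smul_ne ha hax
      rw [hb _ (hd _ this)]
  · rw [ha x hxY]
    by_cases hbx : b • x = x
    · rw [hbx, ha x hxY]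
    · have hbxZ : b • x ∈ Z := smul_mem_of_smul_ne hb hbx
      have : b • x ∉ Y := fun h' => (hd _ h') hbxZ
      rw [ha _ this]

/-- Key auxiliary lemma: from (i) and (ii), for every nontrivial `a` there is `Z ∈ Cs`
contained in every set on whose complement `a` acts trivially, together with an
element of `rist G Z` not commuting with `a`. -/
lemma exists_noncommuting [FaithfulSMul G X] {Cs : Set (Set X)}
    (hi : ∀ Y ∈ Cs, rist G Y ≠ ⊥)
    (hii : ∀ g : G, g ≠ 1 → ∃ Z ∈ Cs, Z ∩ g • Z = ∅)
    {a : G} (ha : a ≠ 1) :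
    ∃ Z ∈ Cs, (∀ Y : Set X, a ∈ rist G Y → Z ⊆ Y) ∧
      ∃ b ∈ rist G Z, a * b ≠ b * a := by
  obtain ⟨Z, hZ, hdisj⟩ := hii a ha
  have hd : ∀ x : X, x ∈ Z → x ∉ a • Z := by
    intro x hx hx'
    exact (Set.eq_empty_iff_forall_notMem.mp hdisj x) ⟨hx, hx'⟩
  refine ⟨Z, hZ, ?_, ?_⟩
  · intro Y haY z hz
    by_contra hzY
    have haz : a • z = z := haY z hzY
    exact hd z hz ⟨z, hz, haz⟩
  · obtain ⟨b, hbZ, hb1⟩ : ∃ b ∈ rist G Z, b ≠ 1 := by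
      by_contra hcon
      push_neg at hcon
      exact hi Z hZ ((rist G Z).eq_bot_iff_forall.mpr hcon)
    refine ⟨b, hbZ, ?_⟩
    intro heq
    obtain ⟨z, hz⟩ : ∃ z : X, b • z ≠ z := by
      by_contra hcon
      push_neg at hcon
      exact hb1 (eq_of_smul_eq_smul (fun x => by rw [hcon x, one_smul]))
    have hzZ : z ∈ Z := by
      by_contra h
      exact hz (hbZ z h)
    have hazZ : a • z ∉ Z := fun h => hd _ h (Set.smul_mem_smul_set hzZ)
    have : a • b • z = b • a • z := by rw [← mul_smul, ← mul_smul, heq]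
    rw [hbZ _ hazZ] at this
    exact hz (smul_left_cancel a this)

end Helpers

/-- Lemma (micro-supported family): let `G` act faithfully on a set `X`, let `𝒞*` be a
`G`-invariant set of subsets of `X`, and let `𝒞` be the corresponding family of rigid
stabilisers.  If (i)–(ii) hold then 𝒞 is nomadic for `G` (satisfies (A), (B) and is
conjugation-invariant); if (i)–(iii) hold then 𝒞 is a compression family for `H`; if
(i)–(v) hold then 𝒞 is a joinable compression family for `H`. -/
theorem micro_supported_family {G X : Type*} [Group G] [MulAction G X] [FaithfulSMul G X]
    (H : Subgroup G) (Cs : Set (Set X))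
    (hinv : ∀ (g : G), ∀ Y ∈ Cs, g • Y ∈ Cs)
    (C : Set (Subgroup G)) (hC : C = {A : Subgroup G | ∃ Y ∈ Cs, A = rist G Y}) :
    (((∀ Y ∈ Cs, rist G Y ≠ ⊥) ∧
      (∀ g : G, g ≠ 1 → ∃ Z ∈ Cs, Z ∩ g • Z = ∅)) →
        ConjInvariant C ∧ CondA C ∧ CondB C (⊤ : Subgroup G)) ∧
    (((∀ Y ∈ Cs, rist G Y ≠ ⊥) ∧
      (∀ g : G, g ≠ 1 → ∃ Z ∈ Cs, Z ∩ g • Z = ∅) ∧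
      (∀ Y ∈ Cs, ∀ Z ∈ Cs, ∃ g ∈ H, g • Y ⊆ Z)) →
        IsCompressionFamily C H) ∧
    (((∀ Y ∈ Cs, rist G Y ≠ ⊥) ∧
      (∀ g : G, g ≠ 1 → ∃ Z ∈ Cs, Z ∩ g • Z = ∅) ∧
      (∀ Y ∈ Cs, ∀ Z ∈ Cs, ∃ g ∈ H, g • Y ⊆ Z) ∧
      (∀ Y ∈ Cs, ∀ Z ∈ Cs, ¬ rist G Y ≤ rist G Z →
        ∃ W ∈ Cs, W ⊆ Y ∧ rist G (Z ∩ W) = (⊥ : Subgroup G)) ∧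
      (∀ Y ∈ Cs, ∀ Z ∈ Cs,
        (∃ W₁ ∈ Cs, rist G (Y ∩ W₁) = (⊥ : Subgroup G) ∧
          rist G (Z ∩ W₁) = (⊥ : Subgroup G)) →
        ∃ W₂ ∈ Cs, Y ∪ Z ⊆ W₂)) →
        IsJoinableCompressionFamily C H) := by
  subst hC
  -- basic consequences
  have memC : ∀ Y ∈ Cs, rist G Y ∈ {A : Subgroup G | ∃ Y ∈ Cs, A = rist G Y} :=
    fun Y hY => ⟨Y, hY, rfl⟩
  have hconj : ConjInvariant {A : Subgroup G | ∃ Y ∈ Cs, A = rist G Y} := by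
    rintro g A ⟨Y, hY, rfl⟩
    exact ⟨g • Y, hinv g Y hY, conjS_rist g Y⟩
  have hA : (∀ Y ∈ Cs, rist G Y ≠ ⊥) →
      (∀ g : G, g ≠ 1 → ∃ Z ∈ Cs, Z ∩ g • Z = ∅) →
      CondA {A : Subgroup G | ∃ Y ∈ Cs, A = rist G Y} := by
    rintro hi hii A ⟨Y, hY, rfl⟩
    obtain ⟨a, haY, ha1⟩ : ∃ a ∈ rist G Y, a ≠ 1 := by
      by_contra hcon
      push_neg at hcon
      exact hi Y hY ((rist G Y).eq_bot_iff_forall.mpr hcon)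
    obtain ⟨Z, hZ, hsub, b, hbZ, hab⟩ := exists_noncommuting hi hii ha1
    exact ⟨a, haY, b, rist_mono (hsub Y haY) hbZ, hab⟩
  have hB : (∀ Y ∈ Cs, rist G Y ≠ ⊥) →
      (∀ g : G, g ≠ 1 → ∃ Z ∈ Cs, Z ∩ g • Z = ∅) →
      ∀ H' : Subgroup G, CondB {A : Subgroup G | ∃ Y ∈ Cs, A = rist G Y} H' := by
    intro _ hii H' g _ hg1
    obtain ⟨Z, hZ, hdisj⟩ := hii g hg1
    refine ⟨rist G Z, memC Z hZ, ?_⟩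
    rw [conjS_rist]
    refine le_bot_iff.mp (Subgroup.commutator_le.mpr ?_)
    intro a haZ b hbZ
    rw [Subgroup.mem_bot, commutatorElement_eq_one_iff_mul_comm]
    exact rist_commute hdisj haZ hbZ
  have hCc : (∀ Y ∈ Cs, ∀ Z ∈ Cs, ∃ g ∈ H, g • Y ⊆ Z) →
      CondC {A : Subgroup G | ∃ Y ∈ Cs, A = rist G Y} H := by
    rintro hiii A ⟨Y, hY, rfl⟩ B ⟨Z, hZ, rfl⟩
    obtain ⟨g, hgH, hgsub⟩ := hiii Y hY Z hZ
    refine ⟨g, hgH, ?_⟩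
    rw [conjS_rist]
    exact rist_mono hgsub
  refine ⟨fun ⟨hi, hii⟩ => ⟨hconj, hA hi hii, hB hi hii ⊤⟩,
    fun ⟨hi, hii, hiii⟩ => ⟨hconj, hA hi hii, hB hi hii H, hCc hiii⟩,
    fun ⟨hi, hii, hiii, hiv, hv⟩ => ⟨⟨hconj, hA hi hii, hB hi hii H, hCc hiii⟩, ?_⟩⟩
  -- Condition (D)
  rintro A ⟨Y', hY', rfl⟩ B ⟨Z', hZ', rfl⟩ C' ⟨W', hW', rfl⟩ hcomm hnle
  obtain ⟨W, hW, hWsub, hZW⟩ := hiv W' hW' Z' hZ' hnle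
  have hYW : rist G (Y' ∩ W) = (⊥ : Subgroup G) := by
    rw [Subgroup.eq_bot_iff_forall]
    intro h hh
    by_contra hne
    obtain ⟨Z, hZ, hsub, b, hbZ, hab⟩ := exists_noncommuting hi hii hne
    have hZsub : Z ⊆ Y' ∩ W := hsub _ hh
    have hbY' : b ∈ rist G Y' :=
      rist_mono (hZsub.trans Set.inter_subset_left) hbZ
    have hhW' : h ∈ rist G W' :=
      rist_mono (Set.inter_subset_right.trans hWsub) hh
    open scoped commutatorElement in
    have : ⁅b, h⁆ ∈ ⁅rist G Y', rist G W'⁆ :=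
      Subgroup.commutator_mem_commutator hbY' hhW'
    rw [hcomm, Subgroup.mem_bot, commutatorElement_eq_one_iff_mul_comm] at this
    exact hab this.symm
  obtain ⟨W₂, hW₂, hsub₂⟩ := hv Y' hY' Z' hZ' ⟨W, hW, hYW, hZW⟩
  refine ⟨rist G W₂, memC W₂ hW₂, sup_le ?_ ?_⟩
  · exact rist_mono (Set.subset_union_left.trans hsub₂)
  · exact rist_mono (Set.subset_union_right.trans hsub₂)


end Paper
end
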